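/- Let K be a spherical convex body contained in the open hemisphere S ⊆ S^n such that the center c of S lies in proj_{L,H}(K). Then proj_{L,H}(K) is spherically convex. -/

import Mathlib

open Real Set MeasureTheory Metric
open scoped RealInnerProductSpace ENNReal

noncomputable section

/-- Euclidean `(n+1)`-space; the unit sphere `S^n` is `Metric.sphere (0 : EN n) 1`. -/
abbrev EN (n : ℕ) : Type := EuclideanSpace ℝ (Fin (n + 1))

/-- The spherical distance `d_s(x,y) = arccos ⟨x,y⟩`. -/
def sphDistN (n : ℕ) (x y : EN n) : ℝ := Real.arccos ⟪x, y⟫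

/-- The shorter great-circle arc (spherical segment) joining two non-antipodal
unit vectors: the radial projection of the Euclidean segment-cone. -/
def sphSegN (n : ℕ) (x y : EN n) : Set (EN n) :=
  {z | ∃ a b : ℝ, 0 ≤ a ∧ 0 ≤ b ∧ a • x + b • y ≠ 0 ∧
      z = ‖a • x + b • y‖⁻¹ • (a • x + b • y)}

/-- A set is spherically convex if it consists of unit vectors, is contained in an
open hemisphere, and contains the shorter arc joining any two of its (non-antipodal)
points. -/
def SphConvexN (n : ℕ) (K : Set (EN n)) : Prop :=
  K ⊆ sphere (0 : EN n) 1 ∧ (∃ e : EN n, ‖e‖ = 1 ∧ ∀ x ∈ K, 0 < ⟪e, x⟫) ∧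
    ∀ x ∈ K, ∀ y ∈ K, x ≠ -y → sphSegN n x y ⊆ K

/-- Relative interior of a subset of the sphere (interior within the sphere). -/
def relIntN (n : ℕ) (K : Set (EN n)) : Set (EN n) :=
  {x | ∃ ε : ℝ, 0 < ε ∧ sphere (0 : EN n) 1 ∩ ball x ε ⊆ K}

/-- A spherical convex body: compact, spherically convex, with nonempty
(relative) interior. -/
def SphBodyN (n : ℕ) (K : Set (EN n)) : Prop :=
  IsCompact K ∧ SphConvexN n K ∧ (K ∩ relIntN n K).Nonempty

/-- The center `c` of the fixed open hemisphere `S`: the first standard basis vector. -/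
def e0 (n : ℕ) : EN n := EuclideanSpace.single 0 1

/-- The second standard basis vector, spanning (with `c`) the plane of the great
circle `L̄`. -/
def e1 (n : ℕ) : EN n := EuclideanSpace.single 1 1

/-- The fixed open hemisphere `S` centered at `c`. -/
def hemiN (n : ℕ) : Set (EN n) := {p ∈ sphere (0 : EN n) 1 | 0 < ⟪e0 n, p⟫}

/-- The point `cos θ cos φ • e₀ + cos θ sin φ • e₁ + sin θ • u` of `S`; here `θ` is
the spherical distance from the great circle `L̄` (in the plane of `e₀,e₁`), `u` is a
unit vector orthogonal to this plane, and `φ` parametrizes the distance curve. -/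
def sphPtN (n : ℕ) (θ φ : ℝ) (u : EN n) : EN n :=
  (Real.cos θ * Real.cos φ) • e0 n + (Real.cos θ * Real.sin φ) • e1 n + Real.sin θ • u

/-- `u` is a unit vector orthogonal to the plane of the great circle `L̄`. -/
def inAxisComp (n : ℕ) (u : EN n) : Prop := ‖u‖ = 1 ∧ ⟪e0 n, u⟫ = 0 ∧ ⟪e1 n, u⟫ = 0

/-- The distance curve with axis `L` at spherical distance `θ` from `L̄`, lying in the
2-dimensional great sphere through `L̄` determined by `u`; for `θ = 0` it is `L` itself. -/
def distCurveN (n : ℕ) (θ : ℝ) (u : EN n) : Set (EN n) :=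
  {p | ∃ φ ∈ Ioo (-(π/2)) (π/2), p = sphPtN n θ φ u}

/-- The set of parameters `φ` at which the distance curve determined by `(θ,u)`
meets `K`. -/
def sliceN (n : ℕ) (K : Set (EN n)) (θ : ℝ) (u : EN n) : Set ℝ :=
  {φ | φ ∈ Ioo (-(π/2)) (π/2) ∧ sphPtN n θ φ u ∈ K}

/-- The connectedness property: `X ∩ C` is connected (possibly empty or a point)
for every distance curve `C` with axis `L`. -/
def ConnPropN (n : ℕ) (X : Set (EN n)) : Prop :=
  ∀ θ : ℝ, 0 ≤ θ → θ < π/2 → ∀ u : EN n, inAxisComp n u →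
    IsPreconnected (X ∩ distCurveN n θ u)

/-- The spherical Steiner symmetral `σ_{L,H}(X)`: on each distance curve `C` with
axis `L` meeting `X`, the arc `X ∩ C` is replaced by the closed subarc of `C` of the
same arclength centered at the point `C ∩ H` (the point with parameter `φ = 0`). -/
def steinerN (n : ℕ) (X : Set (EN n)) : Set (EN n) :=
  {p | ∃ θ : ℝ, 0 ≤ θ ∧ θ < π/2 ∧ ∃ u : EN n, inAxisComp n u ∧ ∃ φ : ℝ,
      p = sphPtN n θ φ u ∧ (sliceN n X θ u).Nonempty ∧
      |φ| ≤ (sSup (sliceN n X θ u) - sInf (sliceN n X θ u)) / 2}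

/-- The projection of `X ⊆ S` onto `H` along `L`: the set of points `q ∈ H` such
that the distance curve with axis `L` through `q` meets `X`. -/
def projLH (n : ℕ) (X : Set (EN n)) : Set (EN n) :=
  {q | ∃ θ : ℝ, 0 ≤ θ ∧ θ < π/2 ∧ ∃ u : EN n, inAxisComp n u ∧
      q = sphPtN n θ 0 u ∧ (X ∩ distCurveN n θ u).Nonempty}

/-- `L = L̄ ∩ S`: the half great circle in the plane of `e₀, e₁` inside `S`. -/
def LsetN (n : ℕ) : Set (EN n) :=
  {p | ∃ φ ∈ Ioo (-(π/2)) (π/2), p = Real.cos φ • e0 n + Real.sin φ • e1 n}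

/-- The spherical convex hull: intersection of all spherically convex sets
containing the given set. -/
def sphConvexHullN (n : ℕ) (A : Set (EN n)) : Set (EN n) :=
  ⋂₀ {C | SphConvexN n C ∧ A ⊆ C}

lemma fin_zero_ne_one {n : ℕ} (hn : 1 ≤ n) : (0 : Fin (n+1)) ≠ 1 := by
  intro h
  have h' := congrArg Fin.val h
  rw [Fin.val_zero, Fin.val_one', Nat.mod_eq_of_lt (by omega)] at h'
  omega

lemma inner_e0_e0 (n : ℕ) : ⟪e0 n, e0 n⟫ = 1 := by
  rw [e0, EuclideanSpace.inner_single_left]; simp [EuclideanSpace.single_apply]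

lemma inner_e1_e1 (n : ℕ) : ⟪e1 n, e1 n⟫ = 1 := by
  rw [e1, EuclideanSpace.inner_single_left]; simp [EuclideanSpace.single_apply]

lemma inner_e0_e1 {n : ℕ} (hn : 1 ≤ n) : ⟪e0 n, e1 n⟫ = 0 := by
  rw [e0, e1, EuclideanSpace.inner_single_left]
  simp only [EuclideanSpace.single_apply, RCLike.star_def, conj_trivial]
  rw [if_neg (fin_zero_ne_one hn)]; ring

lemma norm_e0 (n : ℕ) : ‖e0 n‖ = 1 := by
  have h := inner_e0_e0 n
  rw [real_inner_self_eq_norm_sq] at h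
  nlinarith [norm_nonneg (e0 n)]

lemma inner_sphPtN {n : ℕ} (hn : 1 ≤ n) {u u' : EN n} (hu : inAxisComp n u)
    (hu' : inAxisComp n u') (θ φ θ' φ' : ℝ) :
    ⟪sphPtN n θ φ u, sphPtN n θ' φ' u'⟫ =
      Real.cos θ * Real.cos θ' * Real.cos (φ - φ') + Real.sin θ * Real.sin θ' * ⟪u, u'⟫ := by
  have h01 := inner_e0_e1 hn
  have h10 : ⟪e1 n, e0 n⟫ = 0 := by rw [real_inner_comm]; exact h01
  have hu0 : ⟪u, e0 n⟫ = 0 := by rw [real_inner_comm]; exact hu.2.1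
  have hu1 : ⟪u, e1 n⟫ = 0 := by rw [real_inner_comm]; exact hu.2.2
  simp only [sphPtN, inner_add_left, inner_add_right, real_inner_smul_left,
    real_inner_smul_right, inner_e0_e0, inner_e1_e1, h01, h10, hu0, hu1,
    hu'.2.1, hu'.2.2, Real.cos_sub]
  ring

lemma norm_sphPtN {n : ℕ} (hn : 1 ≤ n) {u : EN n} (hu : inAxisComp n u) (θ φ : ℝ) :
    ‖sphPtN n θ φ u‖ = 1 := by
  have h := inner_sphPtN hn hu hu θ φ θ φ
  rw [real_inner_self_eq_norm_sq] at h
  have huu : ⟪u, u⟫ = 1 := by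
    rw [real_inner_self_eq_norm_sq, hu.1]; norm_num
  rw [huu, sub_self, Real.cos_zero] at h
  nlinarith [norm_nonneg (sphPtN n θ φ u), Real.sin_sq_add_cos_sq θ]

lemma inner_e0_sphPtN {n : ℕ} (hn : 1 ≤ n) {u : EN n} (hu : inAxisComp n u) (θ φ : ℝ) :
    ⟪e0 n, sphPtN n θ φ u⟫ = Real.cos θ * Real.cos φ := by
  simp only [sphPtN, inner_add_right, real_inner_smul_right, inner_e0_e0,
    inner_e0_e1 hn, hu.2.1]
  ring

lemma inner_e1_sphPtN {n : ℕ} (hn : 1 ≤ n) {u : EN n} (hu : inAxisComp n u) (θ φ : ℝ) :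
    ⟪e1 n, sphPtN n θ φ u⟫ = Real.cos θ * Real.sin φ := by
  have h10 : ⟪e1 n, e0 n⟫ = 0 := by rw [real_inner_comm]; exact inner_e0_e1 hn
  simp only [sphPtN, inner_add_right, real_inner_smul_right, inner_e1_e1, h10, hu.2.2]
  ring

lemma norm_sq_combo {n : ℕ} (x y : EN n) (a b : ℝ) :
    ‖a • x + b • y‖^2 = a^2*‖x‖^2 + 2*(a*b)*⟪x,y⟫ + b^2*‖y‖^2 := by
  rw [← real_inner_self_eq_norm_sq, ← real_inner_self_eq_norm_sq, ← real_inner_self_eq_norm_sq]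
  simp only [inner_add_left, inner_add_right, real_inner_smul_left, real_inner_smul_right,
    real_inner_comm x y]
  ring

lemma norm_sq_triple {n : ℕ} (x y z : EN n) (A B C : ℝ) (hxy : ⟪x,y⟫ = 0)
    (hxz : ⟪x,z⟫ = 0) (hyz : ⟪y,z⟫ = 0) (hx : ‖x‖ = 1) (hy : ‖y‖ = 1) (hz : ‖z‖ = 1) :
    ‖A•x + B•y + C•z‖^2 = A^2 + B^2 + C^2 := by
  have hyx : ⟪y,x⟫ = 0 := by rw [real_inner_comm]; exact hxy
  have hzx : ⟪z,x⟫ = 0 := by rw [real_inner_comm]; exact hxz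
  have hzy : ⟪z,y⟫ = 0 := by rw [real_inner_comm]; exact hyz
  have hxx : ⟪x,x⟫ = 1 := by rw [real_inner_self_eq_norm_sq, hx]; norm_num
  have hyy : ⟪y,y⟫ = 1 := by rw [real_inner_self_eq_norm_sq, hy]; norm_num
  have hzz : ⟪z,z⟫ = 1 := by rw [real_inner_self_eq_norm_sq, hz]; norm_num
  rw [← real_inner_self_eq_norm_sq]
  simp only [inner_add_left, inner_add_right, real_inner_smul_left, real_inner_smul_right,
    hxy, hxz, hyz, hyx, hzx, hzy, hxx, hyy, hzz]
  ring

lemma combo_pos {a b x y : ℝ} (ha : 0 ≤ a) (hb : 0 ≤ b) (hab : ¬(a = 0 ∧ b = 0))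
    (hx : 0 < x) (hy : 0 < y) : 0 < a*x + b*y := by
  rcases ha.lt_or_eq with ha' | ha'
  · nlinarith
  · rcases hb.lt_or_eq with hb' | hb'
    · nlinarith
    · exact absurd ⟨ha'.symm, hb'.symm⟩ hab

lemma norm_e1 (n : ℕ) : ‖e1 n‖ = 1 := by
  have h := inner_e1_e1 n
  rw [real_inner_self_eq_norm_sq] at h
  nlinarith [norm_nonneg (e1 n)]

set_option maxHeartbeats 2000000 in
/-- If `K ⊆ S` is a spherical convex body whose projection onto `H`
along `L` contains the center `c` of `S`, then this projection is spherically
convex. -/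
theorem projLH_convex (n : ℕ) (hn : 2 ≤ n) (K : Set (EN n))
    (hK : SphBodyN n K) (hKS : K ⊆ hemiN n) (hc : e0 n ∈ projLH n K) :
    SphConvexN n (projLH n K) := by
  have hn1 : 1 ≤ n := by omega
  obtain ⟨-, hKconv, -⟩ := hK
  have hseg := hKconv.2.2
  have hKpos : ∀ p ∈ K, 0 < ⟪e0 n, p⟫ := fun p hp => (hKS hp).2
  have hKnorm : ∀ p ∈ K, ‖p‖ = 1 := fun p hp => by
    have h := (hKS hp).1
    rwa [mem_sphere_zero_iff_norm] at h
  have hKne : ∀ p ∈ K, ∀ q ∈ K, p ≠ -q := by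
    intro p hp q hq h
    have h1 := hKpos p hp
    have h2 := hKpos q hq
    rw [h, inner_neg_right] at h1
    linarith
  obtain ⟨θ0, hθ00, hθ0π, u0, hu0, he0eq, p0, hp0K, hp0C⟩ := hc
  obtain ⟨φ0, hφ0, hp0eq⟩ := hp0C
  have hcθ0 : Real.cos θ0 = 1 := by
    have h := inner_e0_sphPtN hn1 hu0 θ0 0
    rw [← he0eq, inner_e0_e0, Real.cos_zero, mul_one] at h
    linarith
  have hθ0 : θ0 = 0 := by
    have h := Real.arccos_cos hθ00 (by linarith [Real.pi_pos] : θ0 ≤ π)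
    rw [hcθ0, Real.arccos_one] at h
    linarith
  have hp0' : p0 = Real.cos φ0 • e0 n + Real.sin φ0 • e1 n := by
    rw [hp0eq, hθ0]
    simp [sphPtN]
  refine ⟨?_, ⟨e0 n, norm_e0 n, ?_⟩, ?_⟩
  · rintro q ⟨θ, hθ0', hθπ, u, hu, rfl, -⟩
    rw [mem_sphere_zero_iff_norm]
    exact norm_sphPtN hn1 hu θ 0
  · rintro q ⟨θ, hθ0', hθπ, u, hu, rfl, -⟩
    rw [inner_e0_sphPtN hn1 hu, Real.cos_zero, mul_one]
    exact Real.cos_pos_of_mem_Ioo ⟨by linarith [Real.pi_pos], hθπ⟩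
  · rintro q1 hq1 q2 hq2 hne12 z hz
    obtain ⟨θ1, hθ10, hθ1π, u1, hu1, hq1eq, p1, hp1K, hp1C⟩ := hq1
    obtain ⟨φ1, hφ1, hp1eq⟩ := hp1C
    obtain ⟨θ2, hθ20, hθ2π, u2, hu2, hq2eq, p2, hp2K, hp2C⟩ := hq2
    obtain ⟨φ2, hφ2, hp2eq⟩ := hp2C
    obtain ⟨a, b, ha, hb, hnz, hzeq⟩ := hz
    have hab : ¬(a = 0 ∧ b = 0) := by
      rintro ⟨rfl, rfl⟩
      simp at hnz
    have hc1 : 0 < Real.cos θ1 :=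
      Real.cos_pos_of_mem_Ioo ⟨by linarith [Real.pi_pos], hθ1π⟩
    have hc2 : 0 < Real.cos θ2 :=
      Real.cos_pos_of_mem_Ioo ⟨by linarith [Real.pi_pos], hθ2π⟩
    set α0 := a * Real.cos θ1 + b * Real.cos θ2 with hα0def
    clear_value α0
    have hα0 : 0 < α0 := by rw [hα0def]; exact combo_pos ha hb hab hc1 hc2
    set w : EN n := (a * Real.sin θ1) • u1 + (b * Real.sin θ2) • u2 with hwdef
    clear_value w
    have hq1w : a • q1 + b • q2 = α0 • e0 n + w := by
      rw [hq1eq, hq2eq, hwdef, hα0def]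
      simp only [sphPtN, Real.cos_zero, Real.sin_zero]
      module
    by_cases hw : w = 0
    · have hz' : z = e0 n := by
        rw [hzeq, hq1w, hw, add_zero, norm_smul, Real.norm_eq_abs, abs_of_pos hα0,
          norm_e0, mul_one, smul_smul, inv_mul_cancel₀ (ne_of_gt hα0), one_smul]
      rw [hz']
      exact ⟨θ0, hθ00, hθ0π, u0, hu0, he0eq, ⟨p0, hp0K, ⟨φ0, hφ0, hp0eq⟩⟩⟩
    · set R := ‖a • q1 + b • q2‖ with hRdef
      have hR : 0 < R := norm_pos_iff.mpr hnz
      have hwn : 0 < ‖w‖ := norm_pos_iff.mpr hw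
      have hq1n : ‖q1‖ = 1 := by rw [hq1eq]; exact norm_sphPtN hn1 hu1 _ _
      have hq2n : ‖q2‖ = 1 := by rw [hq2eq]; exact norm_sphPtN hn1 hu2 _ _
      have hinnerq : ⟪q1, q2⟫ =
          Real.cos θ1 * Real.cos θ2 + Real.sin θ1 * Real.sin θ2 * ⟪u1, u2⟫ := by
        rw [hq1eq, hq2eq, inner_sphPtN hn1 hu1 hu2]
        simp
      have hu1u1 : ‖u1‖ = 1 := hu1.1
      have hu2u2 : ‖u2‖ = 1 := hu2.1
      have hR2 : R^2 = α0^2 + ‖w‖^2 := by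
        rw [hRdef, norm_sq_combo, hq1n, hq2n, hinnerq, hwdef, norm_sq_combo,
          hu1u1, hu2u2, hα0def]
        linear_combination (-(a^2) : ℝ) * Real.sin_sq_add_cos_sq θ1 +
          (-(b^2) : ℝ) * Real.sin_sq_add_cos_sq θ2
      set s := ‖w‖ / R with hsdef
      clear_value s
      have hs0 : 0 < s := by rw [hsdef]; exact div_pos hwn hR
      have hs1 : s < 1 := by
        rw [hsdef, div_lt_one hR]
        have hα0sq : 0 < α0^2 := by positivity
        have h2 : ‖w‖^2 < R^2 := by linarith
        exact lt_of_pow_lt_pow_left₀ 2 hR.le h2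
      set v0 : EN n := a • p1 + b • p2 with hv0def
      clear_value v0
      have hv0e0 : 0 < ⟪e0 n, v0⟫ := by
        rw [hv0def]
        simp only [inner_add_right, real_inner_smul_right]
        exact combo_pos ha hb hab (hKpos p1 hp1K) (hKpos p2 hp2K)
      have hv0ne : v0 ≠ 0 := by
        intro h
        rw [h, inner_zero_right] at hv0e0
        exact lt_irrefl _ hv0e0
      have hv0n : 0 < ‖v0‖ := norm_pos_iff.mpr hv0ne
      have hp1n : ‖p1‖ = 1 := hKnorm p1 hp1K
      have hp2n : ‖p2‖ = 1 := hKnorm p2 hp2K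
      have hinnerp : ⟪p1, p2⟫ ≤ ⟪q1, q2⟫ := by
        rw [hinnerq, hp1eq, hp2eq, inner_sphPtN hn1 hu1 hu2]
        have hd : Real.cos θ1 * Real.cos θ2 * Real.cos (φ1 - φ2) ≤
            Real.cos θ1 * Real.cos θ2 * 1 :=
          mul_le_mul_of_nonneg_left (Real.cos_le_one (φ1 - φ2))
            (by positivity)
        linarith
      have hv0R : ‖v0‖ ≤ R := by
        have h1 : ‖v0‖^2 ≤ R^2 := by
          rw [hv0def, hRdef, norm_sq_combo, norm_sq_combo, hp1n, hp2n, hq1n, hq2n]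
          have h2ab : (0:ℝ) ≤ 2 * (a * b) := by
            have := mul_nonneg ha hb
            linarith
          have h3 := mul_le_mul_of_nonneg_left hinnerp h2ab
          linarith
        exact le_of_pow_le_pow_left₀ (by norm_num) hR.le h1
      set v : EN n := ‖v0‖⁻¹ • v0 with hvdef
      clear_value v
      have hvK : v ∈ K := by
        apply hseg p1 hp1K p2 hp2K (hKne p1 hp1K p2 hp2K)
        exact ⟨a, b, ha, hb, by rw [← hv0def]; exact hv0ne, by rw [← hv0def, ← hvdef]⟩
      have hvn : ‖v‖ = 1 := by
        rw [hvdef, norm_smul, Real.norm_eq_abs, abs_of_pos (inv_pos.mpr hv0n),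
          inv_mul_cancel₀ (ne_of_gt hv0n)]
      have hve0 : 0 < ⟪e0 n, v⟫ := hKpos v hvK
      set F : ℝ → EN n := fun t => (1 - t) • p0 + t • v with hFdef
      clear_value F
      have hFe0 : ∀ t ∈ Icc (0:ℝ) 1, 0 < ⟪e0 n, F t⟫ := by
        intro t ht
        simp only [hFdef, inner_add_right, real_inner_smul_right]
        apply combo_pos (by linarith [ht.2]) ht.1 ?_ (hKpos p0 hp0K) hve0
        rintro ⟨h1, h2⟩
        rw [h2] at h1
        norm_num at h1
      have hFne : ∀ t ∈ Icc (0:ℝ) 1, F t ≠ 0 := by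
        intro t ht h
        have h2 := hFe0 t ht
        rw [h, inner_zero_right] at h2
        exact lt_irrefl _ h2
      have hFcont : Continuous F := by
        rw [hFdef]
        exact ((continuous_const.sub continuous_id).smul continuous_const).add
          (continuous_id.smul continuous_const)
      set g : ℝ → ℝ := fun t => t * ‖w‖ / (‖v0‖ * ‖F t‖) with hgdef
      clear_value g
      have hgc : ContinuousOn g (Icc 0 1) := by
        rw [hgdef]
        apply ContinuousOn.div
        · exact (continuous_id.mul continuous_const).continuousOn
        · exact (continuous_const.mul hFcont.norm).continuousOn
        · intro t ht
          exact ne_of_gt (mul_pos hv0n (norm_pos_iff.mpr (hFne t ht)))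
      have hg0 : g 0 = 0 := by simp [hgdef]
      have hg1 : g 1 = ‖w‖ / ‖v0‖ := by
        have hF1 : F 1 = v := by simp [hFdef]
        rw [hgdef]
        simp only [hF1, hvn, one_mul, mul_one]
      have hmem : s ∈ Icc (g 0) (g 1) := by
        rw [hg0, hg1]
        constructor
        · exact le_of_lt hs0
        · rw [hsdef]
          gcongr
      obtain ⟨t, ht, hgt⟩ := intermediate_value_Icc (by norm_num : (0:ℝ) ≤ 1) hgc hmem
      set pst : EN n := ‖F t‖⁻¹ • F t with hpdef
      clear_value pst
      have hpK : pst ∈ K := by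
        apply hseg p0 hp0K v hvK (hKne p0 hp0K v hvK)
        refine ⟨1 - t, t, by linarith [ht.2], ht.1, ?_, ?_⟩
        · have := hFne t ht
          rw [hFdef] at this
          exact this
        · simp only [hpdef, hFdef]
      have hpn : ‖pst‖ = 1 := hKnorm _ hpK
      have hFtn : 0 < ‖F t‖ := norm_pos_iff.mpr (hFne t ht)
      set uz : EN n := ‖w‖⁻¹ • w with huzdef
      clear_value uz
      have hwu1 : ⟪e0 n, w⟫ = 0 := by
        rw [hwdef, inner_add_right, real_inner_smul_right, real_inner_smul_right,
          hu1.2.1, hu2.2.1]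
        ring
      have hwu2 : ⟪e1 n, w⟫ = 0 := by
        rw [hwdef, inner_add_right, real_inner_smul_right, real_inner_smul_right,
          hu1.2.2, hu2.2.2]
        ring
      have huz : inAxisComp n uz := by
        refine ⟨?_, ?_, ?_⟩
        · rw [huzdef, norm_smul, Real.norm_eq_abs, abs_of_pos (inv_pos.mpr hwn),
            inv_mul_cancel₀ (ne_of_gt hwn)]
        · rw [huzdef, real_inner_smul_right, hwu1, mul_zero]
        · rw [huzdef, real_inner_smul_right, hwu2, mul_zero]
      set θz := Real.arcsin s with hθzdef
      clear_value θz
      have hsinθz : Real.sin θz = s := by rw [hθzdef]; exact Real.sin_arcsin (by linarith) (le_of_lt hs1)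
      have hθz0 : 0 ≤ θz := by rw [hθzdef]; exact Real.arcsin_nonneg.mpr (le_of_lt hs0)
      have hθzπ : θz < π / 2 := by rw [hθzdef]; exact Real.arcsin_lt_pi_div_two.mpr hs1
      have hcosθz : Real.cos θz = α0 / R := by
        rw [hθzdef, Real.cos_arcsin]
        have h1 : 1 - s^2 = (α0 / R)^2 := by
          rw [hsdef]
          field_simp
          linear_combination hR2
        rw [h1, Real.sqrt_sq (le_of_lt (div_pos hα0 hR))]
      have hcosθzpos : 0 < Real.cos θz := by
        rw [hcosθz]
        exact div_pos hα0 hR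
      have hzeq2 : z = sphPtN n θz 0 uz := by
        rw [hzeq, hq1w, sphPtN, Real.cos_zero, Real.sin_zero, hcosθz, hsinθz,
          hsdef, huzdef]
        match_scalars <;> field_simp [ne_of_gt hwn, ne_of_gt hR] <;> ring
      have hFt : F t = (1 - t) • p0 + t • v := by rw [hFdef]
      have hdec : ∃ A B : ℝ, pst = A • e0 n + B • e1 n +
          (‖F t‖⁻¹ * (t * ‖v0‖⁻¹)) • w := by
        refine ⟨‖F t‖⁻¹ * ((1-t) * Real.cos φ0 + t * (‖v0‖⁻¹ *
            (a * (Real.cos θ1 * Real.cos φ1) + b * (Real.cos θ2 * Real.cos φ2)))),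
          ‖F t‖⁻¹ * ((1-t) * Real.sin φ0 + t * (‖v0‖⁻¹ *
            (a * (Real.cos θ1 * Real.sin φ1) + b * (Real.cos θ2 * Real.sin φ2)))), ?_⟩
        rw [hpdef, hFt, hvdef, hv0def, hp0', hp1eq, hp2eq, hwdef]
        simp only [sphPtN]
        module
      obtain ⟨A, B, hABdec⟩ := hdec
      have hCw : (‖F t‖⁻¹ * (t * ‖v0‖⁻¹)) * ‖w‖ = s := by
        rw [← hgt]
        simp only [hgdef]
        rw [div_eq_mul_inv, mul_inv]
        ring
      have hC' : ‖F t‖⁻¹ * (t * ‖v0‖⁻¹) = s * ‖w‖⁻¹ := by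
        rw [← hCw, mul_inv_cancel_right₀ (ne_of_gt hwn)]
      have hdec2 : pst = A • e0 n + B • e1 n + s • uz := by
        rw [hABdec, hC', huzdef, smul_smul]
      have hA : A = ⟪e0 n, pst⟫ := by
        rw [hdec2, inner_add_right, inner_add_right, real_inner_smul_right,
          real_inner_smul_right, real_inner_smul_right, inner_e0_e0,
          inner_e0_e1 hn1, huz.2.1]
        ring
      have hApos : 0 < A := by
        rw [hA]
        exact hKpos pst hpK
      have hB2 : A^2 + B^2 + s^2 = 1 := by
        have h := norm_sq_triple (e0 n) (e1 n) uz A B s (inner_e0_e1 hn1)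
          huz.2.1 huz.2.2 (norm_e0 n) (norm_e1 n) huz.1
        rw [hdec2] at hpn
        rw [hpn, one_pow] at h
        linarith
      have hcosθzsq : Real.cos θz ^ 2 = A^2 + B^2 := by
        have h := Real.sin_sq_add_cos_sq θz
        rw [hsinθz] at h
        linarith
      have hB1 : -1 < B / Real.cos θz ∧ B / Real.cos θz < 1 := by
        have hA2 : 0 < A^2 := by positivity
        have h1 : B^2 < Real.cos θz ^ 2 := by linarith
        have habs : |B| < Real.cos θz :=
          lt_of_pow_lt_pow_left₀ 2 hcosθzpos.le (by rw [sq_abs]; exact h1)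
        obtain ⟨hb1, hb2⟩ := abs_lt.mp habs
        constructor
        · rw [lt_div_iff₀ hcosθzpos]
          linarith
        · rw [div_lt_one hcosθzpos]
          exact hb2
      set φz := Real.arcsin (B / Real.cos θz) with hφzdef
      clear_value φz
      have hφzmem : φz ∈ Ioo (-(π/2)) (π/2) := by
        rw [hφzdef]
        exact ⟨Real.neg_pi_div_two_lt_arcsin.mpr hB1.1,
          Real.arcsin_lt_pi_div_two.mpr hB1.2⟩
      have hsinφz : Real.sin φz = B / Real.cos θz := by
        rw [hφzdef]
        exact Real.sin_arcsin (le_of_lt hB1.1) (le_of_lt hB1.2)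
      have hcosφz : Real.cos φz = A / Real.cos θz := by
        rw [hφzdef, Real.cos_arcsin]
        have hcsq : Real.cos θz ^ 2 ≠ 0 := pow_ne_zero 2 (ne_of_gt hcosθzpos)
        have h1 : 1 - (B / Real.cos θz)^2 = (A / Real.cos θz)^2 := by
          rw [div_pow, div_pow, eq_div_iff hcsq, sub_mul, one_mul,
            div_mul_cancel₀ _ hcsq]
          linarith
        rw [h1, Real.sqrt_sq (le_of_lt (div_pos hApos hcosθzpos))]
      have hpeq : pst = sphPtN n θz φz uz := by
        have hcne := ne_of_gt hcosθzpos
        have e1c : Real.cos θz * Real.cos φz = A := by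
          rw [hcosφz, mul_comm, div_mul_cancel₀ _ hcne]
        have e2c : Real.cos θz * Real.sin φz = B := by
          rw [hsinφz, mul_comm, div_mul_cancel₀ _ hcne]
        rw [sphPtN, e1c, e2c, hsinθz]
        exact hdec2
      exact ⟨θz, hθz0, hθzπ, uz, huz, hzeq2, ⟨pst, hpK, ⟨φz, hφzmem, hpeq⟩⟩⟩
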